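/- Let n ≥ 1 and t ≥ 0 be integers and let ℓ > 0 be a real number. Let z₁, …, z_n be nonnegative integers with ∑_{j=1}^n z_j = t, and let w₁, …, w_n be nonnegative integers with ∑_{j=1}^n w_j = t such that every w_j equals ⌊t/n⌋ or ⌈t/n⌉. Then ∑_{j=1}^n (f(z_j + ℓ) − f(z_j)) ≤ ∑_{j=1}^n (f(w_j + ℓ) − f(w_j)). That is, among nonnegative integer sequences with fixed sum t, the quantity ∑_j f(z_j+ℓ) − ∑_j f(z_j) is maximized by the balanced sequence. -/

import Mathlib

open Finset

/-- `f x = x * log x` (note `Real.log 0 = 0`, so `f 0 = 0`). -/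
noncomputable def f (x : ℝ) : ℝ := x * Real.log x

lemma f_continuous : Continuous f := Real.continuous_mul_log

lemma f_hasDerivAt {x : ℝ} (hx : x ≠ 0) : HasDerivAt f (Real.log x + 1) x :=
  Real.hasDerivAt_mul_log hx

lemma shift_hasDerivAt {x c : ℝ} (h : x + c ≠ 0) :
    HasDerivAt (fun y => f (y + c)) (Real.log (x + c) + 1) x := by
  have := (f_hasDerivAt h).comp x ((hasDerivAt_id x).add_const c)
  simpa [Function.comp_def] using this

/-- The discrete increment `d ℓ k = g (k+1) - g k` where `g m = f (m + ℓ) - f m`. -/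
noncomputable def dd (ℓ : ℝ) (k : ℕ) : ℝ :=
  f ((k : ℝ) + (1 + ℓ)) - f ((k : ℝ) + ℓ) - f ((k : ℝ) + 1) + f (k : ℝ)

lemma H_antitoneOn (ℓ : ℝ) (hℓ : 0 < ℓ) :
    AntitoneOn (fun x => f (x + (1 + ℓ)) - f (x + ℓ) - f (x + 1) + f x) (Set.Ici 0) := by
  apply antitoneOn_of_deriv_nonpos (convex_Ici 0)
  · exact ((((f_continuous.comp (continuous_id.add continuous_const)).sub
      (f_continuous.comp (continuous_id.add continuous_const))).sub
      (f_continuous.comp (continuous_id.add continuous_const))).add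
      f_continuous).continuousOn
  · rw [interior_Ici]
    intro x hx
    have hx0 : (0 : ℝ) < x := hx
    have h1 : HasDerivAt (fun y => f (y + (1 + ℓ)) - f (y + ℓ) - f (y + 1) + f y)
        ((Real.log (x + (1 + ℓ)) + 1) - (Real.log (x + ℓ) + 1) - (Real.log (x + 1) + 1)
          + (Real.log x + 1)) x := by
      exact (((shift_hasDerivAt (by positivity)).sub (shift_hasDerivAt (by positivity))).sub
        (shift_hasDerivAt (by positivity))).add (f_hasDerivAt (by positivity))
    exact (h1.differentiableAt.differentiableWithinAt)
  · rw [interior_Ici]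
    intro x hx
    have hx0 : (0 : ℝ) < x := hx
    have h1 : HasDerivAt (fun y => f (y + (1 + ℓ)) - f (y + ℓ) - f (y + 1) + f y)
        ((Real.log (x + (1 + ℓ)) + 1) - (Real.log (x + ℓ) + 1) - (Real.log (x + 1) + 1)
          + (Real.log x + 1)) x := by
      exact (((shift_hasDerivAt (by positivity)).sub (shift_hasDerivAt (by positivity))).sub
        (shift_hasDerivAt (by positivity))).add (f_hasDerivAt (by positivity))
    rw [h1.deriv]
    have key : Real.log (x + (1 + ℓ)) + Real.log x ≤ Real.log (x + ℓ) + Real.log (x + 1) := by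
      rw [← Real.log_mul (by positivity) (by positivity),
        ← Real.log_mul (by positivity) (by positivity)]
      apply Real.log_le_log (by positivity)
      nlinarith
    linarith

lemma dd_anti (ℓ : ℝ) (hℓ : 0 < ℓ) {a b : ℕ} (hab : a ≤ b) : dd ℓ b ≤ dd ℓ a := by
  have := H_antitoneOn ℓ hℓ (Set.mem_Ici.2 (by positivity : (0:ℝ) ≤ (a:ℝ)))
    (Set.mem_Ici.2 (by positivity : (0:ℝ) ≤ (b:ℝ))) (by exact_mod_cast hab)
  simpa [dd] using this

/-- Telescoping: `g m = g 0 + ∑_{k<m} dd k` where `g m = f (m + ℓ) - f m`. -/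
lemma telescope (ℓ : ℝ) (m : ℕ) :
    f ((m : ℝ) + ℓ) - f (m : ℝ) = (f ℓ - f 0) + ∑ k ∈ range m, dd ℓ k := by
  have : ∑ k ∈ range m, dd ℓ k
      = ∑ k ∈ range m, ((f (((k+1 : ℕ) : ℝ) + ℓ) - f ((k+1 : ℕ) : ℝ))
        - (f ((k : ℕ) + ℓ) - f (k : ℝ))) := by
    apply sum_congr rfl
    intro k _
    push_cast
    simp only [dd]
    ring_nf
  rw [this, Finset.sum_range_sub (fun k => f ((k : ℝ) + ℓ) - f (k : ℝ))]
  simp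

lemma count_sum (n t : ℕ) (v : Fin n → ℕ) (hv : ∀ j, v j ≤ t) :
    ∑ k ∈ range t, (univ.filter fun j => k < v j).card = ∑ j, v j := by
  simp only [card_filter]
  rw [Finset.sum_comm]
  apply sum_congr rfl
  intro j _
  rw [← card_filter]
  have : (range t).filter (fun k => k < v j) = range (v j) := by
    ext k
    simp only [mem_filter, mem_range]
    have := hv j
    omega
  rw [this, card_range]

lemma sum_rewrite (n t : ℕ) (ℓ : ℝ) (v : Fin n → ℕ) (hv : ∀ j, v j ≤ t) :
    ∑ j, (f ((v j : ℝ) + ℓ) - f (v j)) =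
      n * (f ℓ - f 0) +
        ∑ k ∈ range t, ((univ.filter fun j => k < v j).card : ℝ) * dd ℓ k := by
  have step1 : ∑ j, (f ((v j : ℝ) + ℓ) - f (v j))
      = ∑ j, ((f ℓ - f 0) + ∑ k ∈ range (v j), dd ℓ k) := by
    apply sum_congr rfl
    intro j _
    exact telescope ℓ (v j)
  rw [step1, Finset.sum_add_distrib, Finset.sum_const, card_univ, Fintype.card_fin,
    nsmul_eq_mul]
  congr 1
  have step2 : ∀ j : Fin n, ∑ k ∈ range (v j), dd ℓ k
      = ∑ k ∈ range t, if k < v j then dd ℓ k else 0 := by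
    intro j
    rw [← Finset.sum_filter]
    congr 1
    ext k
    simp only [mem_filter, mem_range]
    have := hv j
    omega
  rw [Finset.sum_congr rfl (fun j _ => step2 j), Finset.sum_comm]
  apply sum_congr rfl
  intro k _
  rw [← Finset.sum_filter, Finset.sum_const, nsmul_eq_mul]

/-- Among nonnegative integer sequences `z` with fixed sum `t`, the quantity
`∑ j, f (z j + ℓ) - ∑ j, f (z j)` is maximized by the balanced sequence, i.e. any
sequence `w` with sum `t` all of whose entries are `⌊t/n⌋` or `⌈t/n⌉`. -/
theorem balanced_maximizes_shift_sum (n t : ℕ) (hn : 1 ≤ n) (ℓ : ℝ) (hℓ : 0 < ℓ)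
    (z w : Fin n → ℕ)
    (hz : ∑ j, z j = t) (hw : ∑ j, w j = t)
    (hbal : ∀ j, w j = t / n ∨ w j = (t + n - 1) / n) :
    ∑ j, (f ((z j : ℝ) + ℓ) - f (z j)) ≤ ∑ j, (f ((w j : ℝ) + ℓ) - f (w j)) := by
  have hn0 : 0 < n := hn
  set q := t / n with hq
  -- ceiling bounds
  have hceil_le : (t + n - 1) / n ≤ q + 1 := by
    have h1 : (t + n - 1) / n ≤ (t + n) / n := Nat.div_le_div_right (by omega)
    rwa [Nat.add_div_right t hn0] at h1
  have hceil_ge : q ≤ (t + n - 1) / n := Nat.div_le_div_right (by omega)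
  have hwlo : ∀ j, q ≤ w j := by
    intro j; rcases hbal j with h | h <;> omega
  have hwhi : ∀ j, w j ≤ q + 1 := by
    intro j; rcases hbal j with h | h <;> omega
  have hzle : ∀ j, z j ≤ t := fun j =>
    hz ▸ Finset.single_le_sum (fun i _ => Nat.zero_le (z i)) (mem_univ j)
  have hwle : ∀ j, w j ≤ t := fun j =>
    hw ▸ Finset.single_le_sum (fun i _ => Nat.zero_le (w i)) (mem_univ j)
  set cz : ℕ → ℕ := fun k => (univ.filter fun j => k < z j).card with hcz
  set cw : ℕ → ℕ := fun k => (univ.filter fun j => k < w j).card with hcwdef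
  have hrw_z := sum_rewrite n t ℓ z hzle
  have hrw_w := sum_rewrite n t ℓ w hwle
  rw [hrw_z, hrw_w]
  have hkey : ∑ k ∈ range t, ((cz k : ℝ) - cw k) * dd ℓ k ≤ 0 := by
    have hterm : ∀ k ∈ range t,
        ((cz k : ℝ) - cw k) * dd ℓ k ≤ ((cz k : ℝ) - cw k) * dd ℓ q := by
      intro k _
      rcases lt_trichotomy (cz k) (cw k) with h | h | h
      · -- cw k > 0, so ∃ j, k < w j ≤ q + 1, hence k ≤ q
        have hpos : 0 < cw k := by omega
        rw [hcwdef, card_pos] at hpos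
        obtain ⟨j, hj⟩ := hpos
        rw [mem_filter] at hj
        have hkq : k ≤ q := by have := hwhi j; omega
        have hd : dd ℓ q ≤ dd ℓ k := dd_anti ℓ hℓ hkq
        have hfac : ((cz k : ℝ) - cw k) ≤ 0 := by
          have : (cz k : ℝ) ≤ cw k := by exact_mod_cast h.le
          linarith
        nlinarith
      · rw [h]; simp
      · -- cz k > cw k, so cw k < n, hence q ≤ k
        have hczle : cz k ≤ n := by
          rw [hcz]
          simpa using (card_filter_le univ (fun j => k < z j)).trans
            (by simp)
        have hcwlt : cw k < n := by omega
        have hkq : q ≤ k := by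
          by_contra hlt
          push_neg at hlt
          have : (univ.filter fun j => k < w j) = univ := by
            apply filter_true_of_mem
            intro j _
            have := hwlo j
            omega
          have hcwn : cw k = n := by
            show (univ.filter fun j => k < w j).card = n
            rw [this, card_univ, Fintype.card_fin]
          omega
        have hd : dd ℓ k ≤ dd ℓ q := dd_anti ℓ hℓ hkq
        have hfac : (0 : ℝ) ≤ ((cz k : ℝ) - cw k) := by
          have : (cw k : ℝ) ≤ cz k := by exact_mod_cast h.le
          linarith
        nlinarith
    calc ∑ k ∈ range t, ((cz k : ℝ) - cw k) * dd ℓ k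
        ≤ ∑ k ∈ range t, ((cz k : ℝ) - cw k) * dd ℓ q := Finset.sum_le_sum hterm
      _ = ((∑ k ∈ range t, (cz k : ℝ)) - ∑ k ∈ range t, (cw k : ℝ)) * dd ℓ q := by
          rw [← Finset.sum_sub_distrib, ← Finset.sum_mul]
      _ = 0 := by
          have h1 : ∑ k ∈ range t, cz k = t := by
            rw [hcz]; rw [count_sum n t z hzle, hz]
          have h2 : ∑ k ∈ range t, cw k = t := by
            rw [hcwdef]; rw [count_sum n t w hwle, hw]
          have h1' : ∑ k ∈ range t, (cz k : ℝ) = t := by exact_mod_cast h1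
          have h2' : ∑ k ∈ range t, (cw k : ℝ) = t := by exact_mod_cast h2
          rw [h1', h2']
          ring
  have hexp : ∑ k ∈ range t, ((cz k : ℝ) - cw k) * dd ℓ k
      = ∑ k ∈ range t, (cz k : ℝ) * dd ℓ k - ∑ k ∈ range t, (cw k : ℝ) * dd ℓ k := by
    rw [← Finset.sum_sub_distrib]
    apply sum_congr rfl
    intro k _
    ring
  rw [hexp] at hkey
  linarith
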